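/- Let w = [0; a_1, a_2, ...] be an infinite continued fraction whose partial quotients all belong to {1, 2} and whose partial quotient sequence contains no occurrence of the consecutive pattern (2,1,2,1). Then w ≥ w_0, where w_0 = [0; 2,1,2,2, 2,1,2,2, ...] is the periodic continued fraction with period (2,1,2,2). -/

import Mathlib

open Filter

/-- Numerators of the convergents of the continued fraction `[a 0; a 1, a 2, ...]`. -/
def cfNum (a : ℕ → ℤ) : ℕ → ℤ
  | 0 => a 0
  | 1 => a 1 * a 0 + 1
  | n + 2 => a (n + 2) * cfNum a (n + 1) + cfNum a n

/-- Denominators of the convergents of the continued fraction `[a 0; a 1, a 2, ...]`. -/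
def cfDen (a : ℕ → ℤ) : ℕ → ℤ
  | 0 => 1
  | 1 => a 1
  | n + 2 => a (n + 2) * cfDen a (n + 1) + cfDen a n

/-- Value of the infinite continued fraction `[a 0; a 1, a 2, ...]`, as the limit of
its convergents. -/
noncomputable def cfVal (a : ℕ → ℤ) : ℝ :=
  limUnder atTop fun n => (cfNum a n : ℝ) / (cfDen a n : ℝ)

/-- Value of the infinite continued fraction `[0; s 0, s 1, s 2, ...]`. -/
noncomputable def cfZero (s : ℕ → ℤ) : ℝ :=
  cfVal fun n => if n = 0 then 0 else s (n - 1)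

/-- Value of the finite continued fraction `[0; l]`. -/
noncomputable def cfFin : List ℤ → ℝ
  | [] => 0
  | x :: xs => 1 / ((x : ℝ) + cfFin xs)

/-- `λ_i(α) = [a_i; a_{i+1}, ...] + [0; a_{i-1}, ..., a_1]` for `α = [a 0; a 1, a 2, ...]`. -/
noncomputable def lambdaCF (a : ℕ → ℤ) (i : ℕ) : ℝ :=
  cfVal (fun n => a (i + n)) + cfFin ((List.range (i - 1)).map fun j => a (i - 1 - j))

/-- `λ_i(B) = [b_i; b_{i-1}, ...] + [0; b_{i+1}, ...]` for a doubly infinite sequence. -/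
noncomputable def lambdaZ (b : ℤ → ℤ) (i : ℤ) : ℝ :=
  cfVal (fun n => b (i - n)) + cfVal fun n => if n = 0 then 0 else b (i + n)

/-- `M(B) = sup_i λ_i(B)`. -/
noncomputable def MZ (b : ℤ → ℤ) : ℝ := ⨆ i : ℤ, lambdaZ b i

/-- The Lagrange constant `μ(α)`, defined by
`μ(α)⁻¹ = liminf_{p ∈ ℤ, q ∈ ℕ} |q (q α - p)|`. -/
noncomputable def lagrangeConst (α : ℝ) : ℝ :=
  (liminf (fun q : ℕ => ⨅ p : ℤ, |(q : ℝ) * ((q : ℝ) * α - (p : ℝ))|) atTop)⁻¹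

/-- `α` is attainable: `|α - p/q| ≤ 1/(μ(α) q²)` has infinitely many integer solutions. -/
def Attainable (α : ℝ) : Prop :=
  {pq : ℤ × ℤ | 0 < pq.2 ∧
    |α - (pq.1 : ℝ) / (pq.2 : ℝ)| ≤ 1 / (lagrangeConst α * (pq.2 : ℝ) ^ 2)}.Infinite

/-- The Lagrange spectrum: the set of values of `μ(α)` over irrational `α`. -/
def LagrangeSpectrum : Set ℝ := {x | ∃ α : ℝ, Irrational α ∧ lagrangeConst α = x}

/-- The doubly infinite sequence `b` is weakly associated with the number whose partial
quotients are `a 1, a 2, ...`: every central pattern `(b_{-i}, ..., b_i)` occurs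
infinitely often in `(a 1, a 2, ...)`. -/
def WeaklyAssoc (b : ℤ → ℤ) (a : ℕ → ℤ) : Prop :=
  ∀ i : ℕ, ∃ᶠ k in atTop, ∀ j : ℕ, j ≤ 2 * i → a (k + 1 + j) = b ((j : ℤ) - (i : ℤ))

/-- The purely periodic sequence with period `(2,1,2,2)`. -/
def w0seq : ℕ → ℤ := fun k => if k % 4 = 1 then 1 else 2



/-! ### Auxiliary development -/

private def pad (s : ℕ → ℤ) : ℕ → ℤ := fun n => if n = 0 then 0 else s (n - 1)

private lemma cfNum_two (a : ℕ → ℤ) (n : ℕ) :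
    cfNum a (n + 2) = a (n + 2) * cfNum a (n + 1) + cfNum a n := rfl
private lemma cfDen_two (a : ℕ → ℤ) (n : ℕ) :
    cfDen a (n + 2) = a (n + 2) * cfDen a (n + 1) + cfDen a n := rfl

private lemma cf_det (a : ℕ → ℤ) :
    ∀ n, cfNum a (n + 1) * cfDen a n - cfNum a n * cfDen a (n + 1) = (-1) ^ n := by
  intro n
  induction n with
  | zero => simp [cfNum, cfDen]; ring
  | succ m ih =>
      rw [cfNum_two, cfDen_two, pow_succ]
      nlinarith [ih]

private lemma den_pos {s : ℕ → ℤ} (hs : ∀ n, 1 ≤ s n) : ∀ n, 1 ≤ cfDen (pad s) n := by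
  intro n
  induction n using Nat.twoStepInduction with
  | zero => simp [cfDen]
  | one => simpa [cfDen, pad] using hs 0
  | more m ih1 ih2 =>
      rw [cfDen_two, show pad s (m + 2) = s (m + 1) from rfl]
      nlinarith [hs (m + 1)]

private lemma num_nonneg {s : ℕ → ℤ} (hs : ∀ n, 1 ≤ s n) : ∀ n, 0 ≤ cfNum (pad s) n := by
  intro n
  induction n using Nat.twoStepInduction with
  | zero => simp [cfNum, pad]
  | one => simp [cfNum, pad]
  | more m ih1 ih2 =>
      rw [cfNum_two, show pad s (m + 2) = s (m + 1) from rfl]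
      nlinarith [hs (m + 1)]

private lemma num_le_den {s : ℕ → ℤ} (hs : ∀ n, 1 ≤ s n) :
    ∀ n, cfNum (pad s) n ≤ cfDen (pad s) n := by
  intro n
  induction n using Nat.twoStepInduction with
  | zero => simp [cfNum, cfDen, pad]
  | one =>
      show pad s 1 * pad s 0 + 1 ≤ pad s 1
      simpa [pad] using hs 0
  | more m ih1 ih2 =>
      rw [cfNum_two, cfDen_two, show pad s (m + 2) = s (m + 1) from rfl]
      nlinarith [hs (m + 1), den_pos hs m, den_pos hs (m + 1), num_nonneg hs m,
        num_nonneg hs (m + 1)]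

private lemma den_ge {s : ℕ → ℤ} (hs : ∀ n, 1 ≤ s n) : ∀ n : ℕ, (n : ℤ) ≤ cfDen (pad s) n := by
  intro n
  induction n using Nat.twoStepInduction with
  | zero => simp [cfDen]
  | one => simpa [cfDen, pad] using hs 0
  | more m ih1 ih2 =>
      rw [cfDen_two, show pad s (m + 2) = s (m + 1) from rfl]
      have hmul : cfDen (pad s) (m + 1) ≤ s (m + 1) * cfDen (pad s) (m + 1) :=
        le_mul_of_one_le_left (by linarith [den_pos hs (m + 1)]) (hs (m + 1))
      push_cast
      push_cast at ih2
      linarith [den_pos hs m, ih2]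

/-- the convergents as a real sequence -/
private noncomputable def cvg (s : ℕ → ℤ) : ℕ → ℝ :=
  fun n => (cfNum (pad s) n : ℝ) / (cfDen (pad s) n : ℝ)

private lemma cfZero_eq_limUnder (s : ℕ → ℤ) : cfZero s = limUnder atTop (cvg s) := rfl

private lemma den_pos' {s : ℕ → ℤ} (hs : ∀ n, 1 ≤ s n) (n : ℕ) :
    (0 : ℝ) < (cfDen (pad s) n : ℝ) := by
  have := den_pos hs n
  exact_mod_cast lt_of_lt_of_le zero_lt_one this

private lemma cvg_nonneg {s : ℕ → ℤ} (hs : ∀ n, 1 ≤ s n) (n : ℕ) : 0 ≤ cvg s n :=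
  div_nonneg (by exact_mod_cast num_nonneg hs n) (le_of_lt (den_pos' hs n))

private lemma cvg_le_one {s : ℕ → ℤ} (hs : ∀ n, 1 ≤ s n) (n : ℕ) : cvg s n ≤ 1 := by
  rw [cvg, div_le_one (den_pos' hs n)]
  exact_mod_cast num_le_den hs n

private lemma cvg_diff {s : ℕ → ℤ} (hs : ∀ n, 1 ≤ s n) (n : ℕ) :
    |cvg s (n + 1) - cvg s n| =
      1 / ((cfDen (pad s) n : ℝ) * (cfDen (pad s) (n + 1) : ℝ)) := by
  have h1 := den_pos' hs n
  have h2 := den_pos' hs (n + 1)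
  have hdet := cf_det (pad s) n
  have key : cvg s (n + 1) - cvg s n =
      ((cfNum (pad s) (n+1) * cfDen (pad s) n - cfNum (pad s) n * cfDen (pad s) (n+1) : ℤ) : ℝ) /
        ((cfDen (pad s) n : ℝ) * (cfDen (pad s) (n + 1) : ℝ)) := by
    simp only [cvg]
    push_cast
    field_simp
  rw [key, hdet, abs_div]
  push_cast
  rw [abs_pow, abs_neg, abs_one, one_pow, abs_of_pos (by positivity)]

private lemma cvg_tele {s : ℕ → ℤ} (hs : ∀ n, 1 ≤ s n) : ∀ m n : ℕ, 1 ≤ n →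
    |cvg s (n + m) - cvg s n| ≤ 1 / (n : ℝ) - 1 / ((n : ℝ) + (m : ℝ)) := by
  intro m
  induction m with
  | zero => intro n hn; simp
  | succ k ih =>
      intro n hn
      have hn0 : (1 : ℝ) ≤ (n : ℝ) := by exact_mod_cast hn
      have hk0 : (0 : ℝ) ≤ (k : ℝ) := by positivity
      have b1 : ((n : ℝ) + (k : ℝ)) ≤ (cfDen (pad s) (n + k) : ℝ) := by
        have h0 := den_ge hs (n + k)
        have h1 : ((n + k : ℕ) : ℝ) ≤ (cfDen (pad s) (n + k) : ℝ) := by exact_mod_cast h0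
        push_cast at h1; linarith
      have b2 : ((n : ℝ) + (k : ℝ) + 1) ≤ (cfDen (pad s) (n + k + 1) : ℝ) := by
        have h0 := den_ge hs (n + k + 1)
        have h1 : ((n + k + 1 : ℕ) : ℝ) ≤ (cfDen (pad s) (n + k + 1) : ℝ) := by exact_mod_cast h0
        push_cast at h1; linarith
      have p1 : (0 : ℝ) < (n : ℝ) + (k : ℝ) := by linarith
      have p2 : (0 : ℝ) < (n : ℝ) + (k : ℝ) + 1 := by linarith
      have hd : |cvg s (n + k + 1) - cvg s (n + k)| ≤
          1 / (((n : ℝ) + (k : ℝ)) * ((n : ℝ) + (k : ℝ) + 1)) := by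
        rw [cvg_diff hs]
        apply one_div_le_one_div_of_le (by positivity)
        nlinarith
      have key : 1 / (((n : ℝ) + (k : ℝ)) * ((n : ℝ) + (k : ℝ) + 1)) =
          1 / ((n : ℝ) + (k : ℝ)) - 1 / ((n : ℝ) + (k : ℝ) + 1) := by
        field_simp
        ring
      have tri := abs_sub_le (cvg s (n + k + 1)) (cvg s (n + k)) (cvg s n)
      have ihn := ih n hn
      have hcast : ((n : ℝ) + ((k : ℕ) + 1 : ℕ)) = (n : ℝ) + (k : ℝ) + 1 := by
        push_cast; ring
      rw [show n + (k + 1) = n + k + 1 from rfl]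
      push_cast
      rw [show (n : ℝ) + ((k : ℝ) + 1) = (n : ℝ) + (k : ℝ) + 1 by ring]
      linarith

private lemma cvg_close {s : ℕ → ℤ} (hs : ∀ n, 1 ≤ s n) :
    ∀ n m : ℕ, n ≤ m → |cvg s m - cvg s n| ≤ 2 / ((n : ℝ) + 1) := by
  intro n m hnm
  obtain ⟨k, rfl⟩ := Nat.exists_eq_add_of_le hnm
  rcases Nat.eq_zero_or_pos n with rfl | hn
  · have h1 := cvg_nonneg hs (0 + k)
    have h2 := cvg_le_one hs (0 + k)
    have h3 := cvg_nonneg hs 0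
    have h4 := cvg_le_one hs 0
    have hb : |cvg s (0 + k) - cvg s 0| ≤ 1 := by
      rw [abs_sub_le_iff]; constructor <;> linarith
    push_cast
    linarith
  · have h := cvg_tele hs k n hn
    have hn1 : (1 : ℝ) ≤ (n : ℝ) := by exact_mod_cast hn
    have hk0 : (0 : ℝ) ≤ (k : ℝ) := by positivity
    have h2 : |cvg s (n + k) - cvg s n| ≤ 1 / (n : ℝ) := by
      have : 0 ≤ 1 / ((n : ℝ) + (k : ℝ)) := by positivity
      linarith
    have h3 : 1 / (n : ℝ) ≤ 2 / ((n : ℝ) + 1) := by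
      rw [div_le_div_iff₀ (by linarith) (by linarith)]
      linarith
    linarith

private lemma cvg_cauchy {s : ℕ → ℤ} (hs : ∀ n, 1 ≤ s n) : CauchySeq (cvg s) := by
  apply cauchySeq_of_le_tendsto_0 (fun N : ℕ => 2 / ((N : ℝ) + 1))
  · intro n m N hn hm
    rcases le_total n m with h | h
    · calc dist (cvg s n) (cvg s m) = |cvg s m - cvg s n| := by
            rw [Real.dist_eq, abs_sub_comm]
        _ ≤ 2 / ((n : ℝ) + 1) := cvg_close hs n m h
        _ ≤ 2 / ((N : ℝ) + 1) := by
            apply div_le_div_of_nonneg_left (by norm_num) (by positivity)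
            have : (N : ℝ) ≤ (n : ℝ) := by exact_mod_cast hn
            linarith
    · calc dist (cvg s n) (cvg s m) = |cvg s n - cvg s m| := Real.dist_eq _ _
        _ ≤ 2 / ((m : ℝ) + 1) := cvg_close hs m n h
        _ ≤ 2 / ((N : ℝ) + 1) := by
            apply div_le_div_of_nonneg_left (by norm_num) (by positivity)
            have : (N : ℝ) ≤ (m : ℝ) := by exact_mod_cast hm
            linarith
  · apply Tendsto.div_atTop tendsto_const_nhds
    exact tendsto_atTop_add_const_right _ 1 tendsto_natCast_atTop_atTop

private lemma tendsto_cvg {s : ℕ → ℤ} (hs : ∀ n, 1 ≤ s n) :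
    Tendsto (cvg s) atTop (nhds (cfZero s)) := by
  obtain ⟨L, hL⟩ := cauchySeq_tendsto_of_complete (cvg_cauchy hs)
  have : cfZero s = L := by rw [cfZero_eq_limUnder]; exact hL.limUnder_eq
  rwa [this]

private lemma cfZero_nonneg {s : ℕ → ℤ} (hs : ∀ n, 1 ≤ s n) : 0 ≤ cfZero s :=
  ge_of_tendsto (tendsto_cvg hs) (Eventually.of_forall (cvg_nonneg hs))

private lemma cfZero_le_one {s : ℕ → ℤ} (hs : ∀ n, 1 ≤ s n) : cfZero s ≤ 1 :=
  le_of_tendsto (tendsto_cvg hs) (Eventually.of_forall (cvg_le_one hs))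

private lemma cfZero_shift {s : ℕ → ℤ} (hs : ∀ n, 1 ≤ s n) :
    cfZero s = 1 / ((s 0 : ℝ) + cfZero (fun k => s (k + 1))) := by
  set τ : ℕ → ℤ := fun k => s (k + 1) with hτdef
  have hτ : ∀ n, 1 ≤ τ n := fun n => hs (n + 1)
  have hnum : ∀ n, cfNum (pad s) (n + 1) = cfDen (pad τ) n := by
    intro n
    induction n using Nat.twoStepInduction with
    | zero => simp [cfNum, cfDen, pad]
    | one => simp [cfNum, cfDen, pad, hτdef]
    | more m ih1 ih2 =>
        have ih1' : cfNum (pad s) (m + 1) = cfDen (pad τ) m := ih1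
        have ih2' : cfNum (pad s) (m + 2) = cfDen (pad τ) (m + 1) := ih2
        show s (m + 2) * cfNum (pad s) (m + 2) + cfNum (pad s) (m + 1)
            = s (m + 2) * cfDen (pad τ) (m + 1) + cfDen (pad τ) m
        rw [ih1', ih2']
  have hden : ∀ n, cfDen (pad s) (n + 1) = s 0 * cfDen (pad τ) n + cfNum (pad τ) n := by
    intro n
    induction n using Nat.twoStepInduction with
    | zero => simp [cfNum, cfDen, pad]
    | one => simp [cfNum, cfDen, pad, hτdef]; ring
    | more m ih1 ih2 =>
        have ih1' : cfDen (pad s) (m + 1) = s 0 * cfDen (pad τ) m + cfNum (pad τ) m := ih1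
        have ih2' : cfDen (pad s) (m + 2)
            = s 0 * cfDen (pad τ) (m + 1) + cfNum (pad τ) (m + 1) := ih2
        show s (m + 2) * cfDen (pad s) (m + 2) + cfDen (pad s) (m + 1)
            = s 0 * (s (m + 2) * cfDen (pad τ) (m + 1) + cfDen (pad τ) m)
              + (s (m + 2) * cfNum (pad τ) (m + 1) + cfNum (pad τ) m)
        rw [ih1', ih2']
        ring
  have heq : ∀ n, cvg s (n + 1) = 1 / ((s 0 : ℝ) + cvg τ n) := by
    intro n
    have hD : (0 : ℝ) < (cfDen (pad τ) n : ℝ) := den_pos' hτ n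
    have hN : (0 : ℝ) ≤ (cfNum (pad τ) n : ℝ) := by exact_mod_cast num_nonneg hτ n
    have hs0 : (1 : ℝ) ≤ (s 0 : ℝ) := by exact_mod_cast hs 0
    have hpos2 : (0 : ℝ) < (s 0 : ℝ) + (cfNum (pad τ) n : ℝ) / (cfDen (pad τ) n : ℝ) := by
      have := div_nonneg hN hD.le
      linarith
    rw [show cvg s (n + 1) =
        (cfNum (pad s) (n + 1) : ℝ) / (cfDen (pad s) (n + 1) : ℝ) from rfl,
      hnum n, hden n]
    rw [show cvg τ n = (cfNum (pad τ) n : ℝ) / (cfDen (pad τ) n : ℝ) from rfl]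
    push_cast
    rw [div_eq_div_iff (by nlinarith) (by positivity)]
    field_simp
  have hpos : (0 : ℝ) < (s 0 : ℝ) + cfZero τ := by
    have h1 : (1 : ℝ) ≤ (s 0 : ℝ) := by exact_mod_cast hs 0
    have h2 := cfZero_nonneg hτ
    linarith
  have h1 : Tendsto (fun n => cvg s (n + 1)) atTop (nhds (cfZero s)) :=
    (tendsto_cvg hs).comp (tendsto_add_atTop_nat 1)
  have h2 : Tendsto (fun n => 1 / ((s 0 : ℝ) + cvg τ n)) atTop
      (nhds (1 / ((s 0 : ℝ) + cfZero τ))) := by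
    simp only [one_div]
    exact (tendsto_const_nhds.add (tendsto_cvg hτ)).inv₀ (ne_of_gt hpos)
  have h1' : Tendsto (fun n => 1 / ((s 0 : ℝ) + cvg τ n)) atTop (nhds (cfZero s)) := by
    apply h1.congr
    intro n; exact heq n
  exact tendsto_nhds_unique h1' h2

/-! ### Facts about `w₀` -/

private lemma w0seq_one_le : ∀ n, 1 ≤ w0seq n := by
  intro n; unfold w0seq; split <;> norm_num

private lemma cfZero_shift' {s : ℕ → ℤ} (hs : ∀ n, 1 ≤ s n) (t : ℕ → ℤ)
    (h : ∀ k, t k = s (k + 1)) : cfZero s = 1 / ((s 0 : ℝ) + cfZero t) := by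
  have ht : t = fun k => s (k + 1) := funext h
  rw [ht]
  exact cfZero_shift hs

private lemma w0_quadratic :
    8 * cfZero w0seq ^ 2 + 16 * cfZero w0seq - 7 = 0 := by
  have h0 : ∀ n, 1 ≤ w0seq n := w0seq_one_le
  have h1 : ∀ n, 1 ≤ (fun k => w0seq (k + 1)) n := fun n => w0seq_one_le _
  have h2 : ∀ n, 1 ≤ (fun k => w0seq (k + 2)) n := fun n => w0seq_one_le _
  have h3 : ∀ n, 1 ≤ (fun k => w0seq (k + 3)) n := fun n => w0seq_one_le _
  set w := cfZero w0seq with hwdef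
  set u1 := cfZero (fun k => w0seq (k + 1)) with hu1def
  set u2 := cfZero (fun k => w0seq (k + 2)) with hu2def
  set u3 := cfZero (fun k => w0seq (k + 3)) with hu3def
  have c0 : ((w0seq 0 : ℤ) : ℝ) = 2 := by norm_num [w0seq]
  have c1 : ((w0seq 1 : ℤ) : ℝ) = 1 := by norm_num [w0seq]
  have c2 : ((w0seq 2 : ℤ) : ℝ) = 2 := by norm_num [w0seq]
  have c3 : ((w0seq 3 : ℤ) : ℝ) = 2 := by norm_num [w0seq]
  have e0 : w = 1 / (2 + u1) := by
    have := cfZero_shift' h0 (fun k => w0seq (k + 1)) (fun k => rfl)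
    rwa [c0] at this
  have e1 : u1 = 1 / (1 + u2) := by
    have := cfZero_shift' h1 (fun k => w0seq (k + 2)) (fun k => rfl)
    rwa [show (((fun k => w0seq (k + 1)) 0 : ℤ) : ℝ) = 1 from c1] at this
  have e2 : u2 = 1 / (2 + u3) := by
    have := cfZero_shift' h2 (fun k => w0seq (k + 3)) (fun k => rfl)
    rwa [show (((fun k => w0seq (k + 2)) 0 : ℤ) : ℝ) = 2 from c2] at this
  have e3 : u3 = 1 / (2 + w) := by
    have harg : ∀ k, w0seq k = (fun k => w0seq (k + 3)) (k + 1) := by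
      intro k
      show w0seq k = w0seq (k + 4)
      simp [w0seq, Nat.add_mod_right]
    have := cfZero_shift' h3 w0seq harg
    rwa [show (((fun k => w0seq (k + 3)) 0 : ℤ) : ℝ) = 2 from c3] at this
  have hw0 : 0 ≤ w := cfZero_nonneg h0
  have hu10 : 0 ≤ u1 := cfZero_nonneg h1
  have hu20 : 0 ≤ u2 := cfZero_nonneg h2
  have hu30 : 0 ≤ u3 := cfZero_nonneg h3
  have p2 : (0 : ℝ) < 2 + w := by linarith
  have p5 : (0 : ℝ) < 5 + 2 * w := by linarith
  have p7 : (0 : ℝ) < 7 + 3 * w := by linarith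
  have p19 : (0 : ℝ) < 19 + 8 * w := by linarith
  have g3 : 2 + u3 = (5 + 2 * w) / (2 + w) := by
    rw [e3]
    field_simp
    ring
  have f2 : u2 = (2 + w) / (5 + 2 * w) := by rw [e2, g3, one_div_div]
  have g2 : 1 + u2 = (7 + 3 * w) / (5 + 2 * w) := by
    rw [f2]
    field_simp
    ring
  have f1 : u1 = (5 + 2 * w) / (7 + 3 * w) := by rw [e1, g2, one_div_div]
  have g1 : 2 + u1 = (19 + 8 * w) / (7 + 3 * w) := by
    rw [f1]
    field_simp
    ring
  have f0 : w = (7 + 3 * w) / (19 + 8 * w) := by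
    conv_lhs => rw [e0, g1, one_div_div]
  have f0' : w * (19 + 8 * w) = 7 + 3 * w := by
    have h := f0
    rw [eq_div_iff (ne_of_gt p19)] at h
    exact h
  linear_combination f0'

private lemma w0_le : cfZero w0seq ≤ 3 / 8 := by
  have hq := w0_quadratic
  have h0 := cfZero_nonneg w0seq_one_le
  nlinarith

private lemma main_lemma : ∀ n : ℕ, ∀ s : ℕ → ℤ, (∀ k, s k = 1 ∨ s k = 2) →
    (¬ ∃ i : ℕ, s i = 2 ∧ s (i + 1) = 1 ∧ s (i + 2) = 2 ∧ s (i + 3) = 1) →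
    cfZero w0seq - (1 / 2) ^ n ≤ cfZero s := by
  intro n
  induction n with
  | zero =>
      intro s hs hp
      have hs' : ∀ k, 1 ≤ s k := by
        intro k; rcases hs k with h | h <;> rw [h] <;> norm_num
      have h1 := cfZero_nonneg hs'
      have h2 := cfZero_le_one w0seq_one_le
      norm_num
      linarith
  | succ n ih =>
      intro s hs hp
      have hs' : ∀ k, 1 ≤ s k := by
        intro k; rcases hs k with h | h <;> rw [h] <;> norm_num
      have hs1 : ∀ k, 1 ≤ (fun k => s (k + 1)) k := fun k => hs' _
      have hs2 : ∀ k, 1 ≤ (fun k => s (k + 2)) k := fun k => hs' _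
      have hs3 : ∀ k, 1 ≤ (fun k => s (k + 3)) k := fun k => hs' _
      have hs4 : ∀ k, 1 ≤ (fun k => s (k + 4)) k := fun k => hs' _
      set v1 := cfZero (fun k => s (k + 1)) with hv1def
      set v2 := cfZero (fun k => s (k + 2)) with hv2def
      set v3 := cfZero (fun k => s (k + 3)) with hv3def
      set t := cfZero (fun k => s (k + 4)) with htdef
      have e0 : cfZero s = 1 / ((s 0 : ℝ) + v1) :=
        cfZero_shift' hs' (fun k => s (k + 1)) (fun k => rfl)
      have e1 : v1 = 1 / ((s 1 : ℝ) + v2) :=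
        cfZero_shift' hs1 (fun k => s (k + 2)) (fun k => rfl)
      have e2 : v2 = 1 / ((s 2 : ℝ) + v3) :=
        cfZero_shift' hs2 (fun k => s (k + 3)) (fun k => rfl)
      have e3 : v3 = 1 / ((s 3 : ℝ) + t) :=
        cfZero_shift' hs3 (fun k => s (k + 4)) (fun k => rfl)
      have hv10 : 0 ≤ v1 := cfZero_nonneg hs1
      have hv11 : v1 ≤ 1 := cfZero_le_one hs1
      have hv20 : 0 ≤ v2 := cfZero_nonneg hs2
      have hv21 : v2 ≤ 1 := cfZero_le_one hs2
      have hv30 : 0 ≤ v3 := cfZero_nonneg hs3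
      have hv31 : v3 ≤ 1 := cfZero_le_one hs3
      have ht0 : 0 ≤ t := cfZero_nonneg hs4
      have ht1 : t ≤ 1 := cfZero_le_one hs4
      have hw38 := w0_le
      have hcpos : (0 : ℝ) < (1 / 2 : ℝ) ^ (n + 1) := by positivity
      have hcpos' : (0 : ℝ) < (1 / 2 : ℝ) ^ n := by positivity
      have hcle : ((1 : ℝ) / 2) ^ n ≤ 1 := by
        apply pow_le_one₀ <;> norm_num
      rcases hs 0 with h0 | h0
      · -- s 0 = 1 : value ≥ 1/2
        rw [e0, h0]
        have : (1 : ℝ) / 2 ≤ 1 / (((1 : ℤ) : ℝ) + v1) := by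
          apply one_div_le_one_div_of_le (by push_cast; linarith)
          push_cast
          linarith
        linarith
      rcases hs 1 with h1 | h1
      · rcases hs 2 with h2 | h2
        · -- s0=2, s1=1, s2=1 : value ≥ 3/8
          have b2 : (1 : ℝ) / 2 ≤ v2 := by
            rw [e2, h2]
            apply one_div_le_one_div_of_le (by push_cast; linarith)
            push_cast
            linarith
          have b1 : v1 ≤ 2 / 3 := by
            rw [e1, h1]
            rw [div_le_div_iff₀ (by push_cast; linarith) (by norm_num)]
            push_cast
            linarith
          have b0 : (3 : ℝ) / 8 ≤ cfZero s := by
            rw [e0, h0]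
            rw [div_le_div_iff₀ (by norm_num) (by push_cast; linarith)]
            push_cast
            linarith
          linarith
        · -- s0=2, s1=1, s2=2 : forbidden unless s3=2
          rcases hs 3 with h3 | h3
          · exact absurd ⟨0, h0, h1, h2, h3⟩ hp
          · -- recursive case
            have hs4' : ∀ k, (fun k => s (k + 4)) k = 1 ∨ (fun k => s (k + 4)) k = 2 :=
              fun k => hs (k + 4)
            have hp4 : ¬ ∃ i : ℕ, (fun k => s (k + 4)) i = 2 ∧ (fun k => s (k + 4)) (i + 1) = 1 ∧
                (fun k => s (k + 4)) (i + 2) = 2 ∧ (fun k => s (k + 4)) (i + 3) = 1 := by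
              rintro ⟨i, p1, p2, p3, p4⟩
              exact hp ⟨i + 4, p1, p2, p3, p4⟩
            have hIH : cfZero w0seq - (1 / 2) ^ n ≤ t := ih _ hs4' hp4
            have p2' : (0 : ℝ) < 2 + t := by linarith
            have p5 : (0 : ℝ) < 5 + 2 * t := by linarith
            have p7 : (0 : ℝ) < 7 + 3 * t := by linarith
            have p19 : (0 : ℝ) < 19 + 8 * t := by linarith
            have g3 : ((2 : ℤ) : ℝ) + v3 = (5 + 2 * t) / (2 + t) := by
              rw [e3, h3]
              push_cast
              field_simp
              ring
            have f2 : v2 = (2 + t) / (5 + 2 * t) := by rw [e2, h2, g3, one_div_div]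
            have g2 : ((1 : ℤ) : ℝ) + v2 = (7 + 3 * t) / (5 + 2 * t) := by
              rw [f2]
              push_cast
              field_simp
              ring
            have f1 : v1 = (5 + 2 * t) / (7 + 3 * t) := by rw [e1, h1, g2, one_div_div]
            have g1 : ((2 : ℤ) : ℝ) + v1 = (19 + 8 * t) / (7 + 3 * t) := by
              rw [f1]
              push_cast
              field_simp
              ring
            have f0 : cfZero s = (7 + 3 * t) / (19 + 8 * t) := by
              rw [e0, h0, g1, one_div_div]
            rw [f0, le_div_iff₀ p19]
            have hq := w0_quadratic
            have hw0 := cfZero_nonneg w0seq_one_le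
            set w := cfZero w0seq
            set c := ((1 : ℝ) / 2) ^ n with hcdef
            have hpow : ((1 : ℝ) / 2) ^ (n + 1) = c / 2 := by
              rw [hcdef, pow_succ]
              ring
            rw [hpow]
            have key : 0 ≤ (t - w + c) * (3 - 8 * w) := by
              apply mul_nonneg
              · linarith
              · linarith
            nlinarith [mul_nonneg ht0 hcpos'.le, key, mul_nonneg hw0 hcpos'.le]
      · -- s0=2, s1=2 : value ≥ 2/5
        have b1 : v1 ≤ 1 / 2 := by
          rw [e1, h1]
          rw [div_le_div_iff₀ (by push_cast; linarith) (by norm_num)]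
          push_cast
          linarith
        have b0 : (2 : ℝ) / 5 ≤ cfZero s := by
          rw [e0, h0]
          rw [div_le_div_iff₀ (by norm_num) (by push_cast; linarith)]
          push_cast
          linarith
        linarith

/-- Any continued fraction `[0; a 0, a 1, ...]` with partial quotients in `{1,2}` and no
occurrence of the pattern `(2,1,2,1)` is at least `w₀ = [0; 2,1,2,2, 2,1,2,2, ...]`. -/
theorem stmt5 (a : ℕ → ℤ) (ha : ∀ n, a n = 1 ∨ a n = 2)
    (hpat : ¬ ∃ i : ℕ, a i = 2 ∧ a (i + 1) = 1 ∧ a (i + 2) = 2 ∧ a (i + 3) = 1) :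
    cfZero w0seq ≤ cfZero a := by
  by_contra hcon
  push_neg at hcon
  obtain ⟨n, hn⟩ := exists_pow_lt_of_lt_one (sub_pos.mpr hcon) (by norm_num : (1 / 2 : ℝ) < 1)
  have h := main_lemma n a ha hpat
  linarith
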